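/- Fix a real constant α and write a = sin α. Let G(f, v) be a smooth real-valued function of two real variables on an open set U ⊆ ℝ² satisfying the X₂-reduced equation (G + G_{vv} − 2a G_v) G_{ff} − (G_f)² − (G_{vf})² + 2a G_f G_{vf} = 4 on U, with G_f > 0 on U. Suppose the map (f, v) ↦ (ξ, v) := (ln G_f(f, v), v) is a diffeomorphism from U onto an open set U′ ⊆ ℝ² with smooth inverse (ξ, v) ↦ (f(ξ, v), v). Then f(ξ, v) satisfies the linear equation 4 e^{−2ξ} (f_{ξξ} − f_ξ) + f_{vv} + 2 sin α · f_{ξv} + f_{ξξ} = 0 on U′. -/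

import Mathlib

noncomputable section

/-- Partial derivatives of a function of two real variables. -/
def p1 (H : ℝ → ℝ → ℝ) : ℝ → ℝ → ℝ := fun a b => deriv (fun s => H s b) a
def p2 (H : ℝ → ℝ → ℝ) : ℝ → ℝ → ℝ := fun a b => deriv (fun s => H a s) b

open Real Filter Topology

lemma clm_eval (L : ℝ×ℝ →L[ℝ] ℝ) (x y : ℝ) : L (x,y) = x * L (1,0) + y * L (0,1) := by
  have h : ((x, y) : ℝ×ℝ) = x • ((1:ℝ),(0:ℝ)) + y • ((0:ℝ),(1:ℝ)) := by simp
  rw [h, map_add, map_smul, map_smul, smul_eq_mul, smul_eq_mul]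

lemma diffAt {U : Set (ℝ×ℝ)} (hU : IsOpen U) {H : ℝ×ℝ → ℝ}
    (hH : ContDiffOn ℝ (⊤:ℕ∞) H U) {p : ℝ×ℝ} (hp : p ∈ U) : DifferentiableAt ℝ H p :=
  (hH.contDiffAt (hU.mem_nhds hp)).differentiableAt (by simp)

lemma contDiffOn_fderiv_apply {U : Set (ℝ×ℝ)} (hU : IsOpen U) {H : ℝ×ℝ → ℝ}
    (hH : ContDiffOn ℝ (⊤:ℕ∞) H U) (u : ℝ×ℝ) :
    ContDiffOn ℝ (⊤:ℕ∞) (fun p => fderiv ℝ H p u) U :=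
  (hH.fderiv_of_isOpen hU (by exact_mod_cast le_top)).clm_apply contDiffOn_const

lemma deriv_fst (H : ℝ×ℝ → ℝ) (a b : ℝ) (h : DifferentiableAt ℝ H (a,b)) :
    deriv (fun s => H (s,b)) a = fderiv ℝ H (a,b) (1,0) := by
  have h1 : HasDerivAt (fun s : ℝ => ((s, b) : ℝ×ℝ)) (1,0) a :=
    HasDerivAt.prodMk (hasDerivAt_id a) (hasDerivAt_const a b)
  exact (h.hasFDerivAt.comp_hasDerivAt a h1).deriv

lemma deriv_snd (H : ℝ×ℝ → ℝ) (a b : ℝ) (h : DifferentiableAt ℝ H (a,b)) :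
    deriv (fun s => H (a,s)) b = fderiv ℝ H (a,b) (0,1) := by
  have h1 : HasDerivAt (fun s : ℝ => ((a, s) : ℝ×ℝ)) (0,1) b :=
    HasDerivAt.prodMk (hasDerivAt_const b a) (hasDerivAt_id b)
  exact (h.hasFDerivAt.comp_hasDerivAt b h1).deriv

lemma fderiv_symm {U : Set (ℝ×ℝ)} (hU : IsOpen U) {H : ℝ×ℝ → ℝ}
    (hH : ContDiffOn ℝ (⊤:ℕ∞) H U) {q : ℝ×ℝ} (hq : q ∈ U) (u w : ℝ×ℝ) :
    fderiv ℝ (fun p => fderiv ℝ H p u) q w = fderiv ℝ (fun p => fderiv ℝ H p w) q u := by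
  have hH1 : ContDiffOn ℝ (⊤:ℕ∞) (fun p => fderiv ℝ H p) U := hH.fderiv_of_isOpen hU (by exact_mod_cast le_top)
  have hd : DifferentiableAt ℝ (fderiv ℝ H) q :=
    (hH1.contDiffAt (hU.mem_nhds hq)).differentiableAt (by simp)
  have hev : ∀ᶠ y in 𝓝 q, HasFDerivAt H (fderiv ℝ H y) y := by
    filter_upwards [hU.mem_nhds hq] with y hy
    exact (diffAt hU hH hy).hasFDerivAt
  have hsymm := second_derivative_symmetric_of_eventually hev hd.hasFDerivAt u w
  have h1 : ∀ v : ℝ×ℝ, fderiv ℝ (fun p => fderiv ℝ H p v) q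
      = (ContinuousLinearMap.apply ℝ ℝ v).comp (fderiv ℝ (fderiv ℝ H) q) := by
    intro v
    exact ((ContinuousLinearMap.apply ℝ ℝ v).hasFDerivAt.comp q hd.hasFDerivAt).fderiv
  rw [h1 u, h1 w]
  simpa using hsymm.symm



lemma p1_eq {U : Set (ℝ×ℝ)} (hU : IsOpen U) {H : ℝ→ℝ→ℝ} {K : ℝ×ℝ → ℝ}
    (hK : ContDiffOn ℝ (⊤:ℕ∞) K U) (hHK : ∀ p ∈ U, H p.1 p.2 = K p)
    {a b : ℝ} (hp : (a,b) ∈ U) :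
    p1 H a b = fderiv ℝ K (a,b) (1,0) := by
  have hc : ContinuousAt (fun s : ℝ => ((s, b) : ℝ×ℝ)) a := by fun_prop
  have hev : (fun s => H s b) =ᶠ[𝓝 a] (fun s => K (s,b)) := by
    filter_upwards [hc.preimage_mem_nhds (hU.mem_nhds hp)] with s hs
    exact hHK (s,b) hs
  show deriv (fun s => H s b) a = _
  rw [hev.deriv_eq]
  exact deriv_fst K a b (diffAt hU hK hp)

lemma p2_eq {U : Set (ℝ×ℝ)} (hU : IsOpen U) {H : ℝ→ℝ→ℝ} {K : ℝ×ℝ → ℝ}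
    (hK : ContDiffOn ℝ (⊤:ℕ∞) K U) (hHK : ∀ p ∈ U, H p.1 p.2 = K p)
    {a b : ℝ} (hp : (a,b) ∈ U) :
    p2 H a b = fderiv ℝ K (a,b) (0,1) := by
  have hc : ContinuousAt (fun s : ℝ => ((a, s) : ℝ×ℝ)) b := by fun_prop
  have hev : (fun s => H a s) =ᶠ[𝓝 b] (fun s => K (a,s)) := by
    filter_upwards [hc.preimage_mem_nhds (hU.mem_nhds hp)] with s hs
    exact hHK (a,s) hs
  show deriv (fun s => H a s) b = _
  rw [hev.deriv_eq]
  exact deriv_snd K a b (diffAt hU hK hp)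


/-- If G(f, v) solves the X₂-reduced equation
(G + G_{vv} − 2a G_v) G_{ff} − G_f² − G_{vf}² + 2a G_f G_{vf} = 4 (a = sin α) with
G_f > 0, and (f, v) ↦ (ln G_f, v) is a diffeomorphism of U onto U′ with inverse
(ξ, v) ↦ (f(ξ, v), v), then f satisfies the linear equation
4 e^{−2ξ}(f_{ξξ} − f_ξ) + f_{vv} + 2 sin α f_{ξv} + f_{ξξ} = 0 on U′. -/
theorem X2_reduction_linearises (α : ℝ) (U U' : Set (ℝ × ℝ))
    (hU : IsOpen U) (hU' : IsOpen U')
    (G : ℝ → ℝ → ℝ)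
    (hG : ContDiffOn ℝ (⊤ : ℕ∞) (fun p : ℝ × ℝ => G p.1 p.2) U)
    (hGf : ∀ p ∈ U, 0 < p1 G p.1 p.2)
    (heq : ∀ f₀ v : ℝ, (f₀, v) ∈ U →
      (G f₀ v + p2 (p2 G) f₀ v - 2 * Real.sin α * p2 G f₀ v) * p1 (p1 G) f₀ v
        - (p1 G f₀ v) ^ 2 - (p1 (p2 G) f₀ v) ^ 2
        + 2 * Real.sin α * p1 G f₀ v * p1 (p2 G) f₀ v = 4)
    (f : ℝ → ℝ → ℝ)
    (hf : ContDiffOn ℝ (⊤ : ℕ∞) (fun p : ℝ × ℝ => f p.1 p.2) U')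
    (hto : ∀ f₀ v : ℝ, (f₀, v) ∈ U →
      (Real.log (p1 G f₀ v), v) ∈ U' ∧ f (Real.log (p1 G f₀ v)) v = f₀)
    (hfrom : ∀ ξ v : ℝ, (ξ, v) ∈ U' →
      (f ξ v, v) ∈ U ∧ Real.log (p1 G (f ξ v) v) = ξ) :
    ∀ ξ v : ℝ, (ξ, v) ∈ U' →
      4 * Real.exp (-2 * ξ) * (p1 (p1 f) ξ v - p1 f ξ v)
        + p2 (p2 f) ξ v + 2 * Real.sin α * p1 (p2 f) ξ v + p1 (p1 f) ξ v = 0 := by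
  intro ξ v hpU'
  set a := Real.sin α with ha
  set g : ℝ × ℝ → ℝ := fun p => G p.1 p.2 with hgdef
  set Fn : ℝ × ℝ → ℝ := fun p => f p.1 p.2 with hFdef
  set g1 : ℝ × ℝ → ℝ := fun p => fderiv ℝ g p (1,0) with hg1def
  set g2 : ℝ × ℝ → ℝ := fun p => fderiv ℝ g p (0,1) with hg2def
  set g11 : ℝ × ℝ → ℝ := fun p => fderiv ℝ g1 p (1,0) with hg11def
  set g12 : ℝ × ℝ → ℝ := fun p => fderiv ℝ g1 p (0,1) with hg12def
  set g21 : ℝ × ℝ → ℝ := fun p => fderiv ℝ g2 p (1,0) with hg21def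
  set g22 : ℝ × ℝ → ℝ := fun p => fderiv ℝ g2 p (0,1) with hg22def
  set φ1 : ℝ × ℝ → ℝ := fun p => fderiv ℝ Fn p (1,0) with hφ1def
  set φ2 : ℝ × ℝ → ℝ := fun p => fderiv ℝ Fn p (0,1) with hφ2def
  -- smoothness
  have hg1s : ContDiffOn ℝ (⊤:ℕ∞) g1 U := contDiffOn_fderiv_apply hU hG (1,0)
  have hg2s : ContDiffOn ℝ (⊤:ℕ∞) g2 U := contDiffOn_fderiv_apply hU hG (0,1)
  have hg11s : ContDiffOn ℝ (⊤:ℕ∞) g11 U := contDiffOn_fderiv_apply hU hg1s (1,0)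
  have hg12s : ContDiffOn ℝ (⊤:ℕ∞) g12 U := contDiffOn_fderiv_apply hU hg1s (0,1)
  have hg21s : ContDiffOn ℝ (⊤:ℕ∞) g21 U := contDiffOn_fderiv_apply hU hg2s (1,0)
  have hg22s : ContDiffOn ℝ (⊤:ℕ∞) g22 U := contDiffOn_fderiv_apply hU hg2s (0,1)
  have hφ1s : ContDiffOn ℝ (⊤:ℕ∞) φ1 U' := contDiffOn_fderiv_apply hU' hf (1,0)
  have hφ2s : ContDiffOn ℝ (⊤:ℕ∞) φ2 U' := contDiffOn_fderiv_apply hU' hf (0,1)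
  -- conversions p1/p2 → fderiv
  have cg1 : ∀ p ∈ U, p1 G p.1 p.2 = g1 p := fun p hp => p1_eq hU hG (fun _ _ => rfl) hp
  have cg2 : ∀ p ∈ U, p2 G p.1 p.2 = g2 p := fun p hp => p2_eq hU hG (fun _ _ => rfl) hp
  have cg11 : ∀ p ∈ U, p1 (p1 G) p.1 p.2 = g11 p := fun p hp => p1_eq hU hg1s cg1 hp
  have cg21 : ∀ p ∈ U, p1 (p2 G) p.1 p.2 = g21 p := fun p hp => p1_eq hU hg2s cg2 hp
  have cg22 : ∀ p ∈ U, p2 (p2 G) p.1 p.2 = g22 p := fun p hp => p2_eq hU hg2s cg2 hp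
  have cf1 : ∀ p ∈ U', p1 f p.1 p.2 = φ1 p := fun p hp => p1_eq hU' hf (fun _ _ => rfl) hp
  have cf2 : ∀ p ∈ U', p2 f p.1 p.2 = φ2 p := fun p hp => p2_eq hU' hf (fun _ _ => rfl) hp
  have cf11 : ∀ p ∈ U', p1 (p1 f) p.1 p.2 = fderiv ℝ φ1 p (1,0) :=
    fun p hp => p1_eq hU' hφ1s cf1 hp
  have cf21 : ∀ p ∈ U', p1 (p2 f) p.1 p.2 = fderiv ℝ φ2 p (1,0) :=
    fun p hp => p1_eq hU' hφ2s cf2 hp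
  have cf22 : ∀ p ∈ U', p2 (p2 f) p.1 p.2 = fderiv ℝ φ2 p (0,1) :=
    fun p hp => p2_eq hU' hφ2s cf2 hp
  -- the PDE in fderiv form
  have heq' : ∀ p ∈ U,
      (g p + g22 p - 2*a*g2 p) * g11 p - g1 p * g1 p - g21 p * g21 p + 2*a*(g1 p * g21 p) = 4 := by
    intro p hp
    have h0 := heq p.1 p.2 hp
    rw [cg1 p hp, cg2 p hp, cg11 p hp, cg21 p hp, cg22 p hp] at h0
    have hgp : G p.1 p.2 = g p := rfl
    rw [hgp] at h0
    linear_combination h0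
  -- the inverse-function identity
  set Ψ : ℝ × ℝ → ℝ × ℝ := fun p => (Fn p, p.2) with hΨdef
  have hΨU : ∀ p ∈ U', Ψ p ∈ U := fun p hp => (hfrom p.1 p.2 hp).1
  have hI : ∀ p ∈ U', g1 (Ψ p) = Real.exp p.1 := by
    intro p hp
    obtain ⟨hq, hl⟩ := hfrom p.1 p.2 hp
    have hpos := hGf (f p.1 p.2, p.2) hq
    have hc := cg1 (f p.1 p.2, p.2) hq
    have : g1 (Ψ p) = p1 G (f p.1 p.2) p.2 := hc.symm
    have h2 : Real.exp p.1 = p1 G (f p.1 p.2) p.2 := by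
      conv_lhs => rw [← hl]
      exact Real.exp_log hpos
    rw [this, h2]
  -- first-order identities on U'
  have hDΨ : ∀ p ∈ U', HasFDerivAt Ψ
      ((fderiv ℝ Fn p).prod (ContinuousLinearMap.snd ℝ ℝ ℝ)) p := by
    intro p hp
    exact (diffAt hU' hf hp).hasFDerivAt.prodMk hasFDerivAt_snd
  have hI1 : ∀ p ∈ U', φ1 p * g11 (Ψ p) = Real.exp p.1 := by
    intro p hp
    have hΨd := hDΨ p hp
    have hg1d : DifferentiableAt ℝ g1 (Ψ p) := diffAt hU hg1s (hΨU p hp)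
    have hcomp : HasFDerivAt (fun x => g1 (Ψ x))
        ((fderiv ℝ g1 (Ψ p)).comp ((fderiv ℝ Fn p).prod (ContinuousLinearMap.snd ℝ ℝ ℝ))) p :=
      hg1d.hasFDerivAt.comp p hΨd
    have hR : HasFDerivAt (fun x : ℝ×ℝ => Real.exp x.1)
        (Real.exp p.1 • ContinuousLinearMap.fst ℝ ℝ ℝ) p :=
      (Real.hasDerivAt_exp p.1).comp_hasFDerivAt p hasFDerivAt_fst
    have hEE : (fun x => g1 (Ψ x)) =ᶠ[nhds p] fun x : ℝ×ℝ => Real.exp x.1 := by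
      filter_upwards [hU'.mem_nhds hp] with y hy
      exact hI y hy
    have huniq := hcomp.unique (hR.congr_of_eventuallyEq hEE)
    have h10 := congrArg (fun L : ℝ×ℝ →L[ℝ] ℝ => L (1,0)) huniq
    simp only [ContinuousLinearMap.comp_apply, ContinuousLinearMap.smul_apply,
      ContinuousLinearMap.prod_apply, ContinuousLinearMap.coe_fst', ContinuousLinearMap.coe_snd',
      smul_eq_mul] at h10
    rw [clm_eval] at h10
    simpa using h10
  have hI2 : ∀ p ∈ U', φ2 p * g11 (Ψ p) + g12 (Ψ p) = 0 := by
    intro p hp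
    have hΨd := hDΨ p hp
    have hg1d : DifferentiableAt ℝ g1 (Ψ p) := diffAt hU hg1s (hΨU p hp)
    have hcomp : HasFDerivAt (fun x => g1 (Ψ x))
        ((fderiv ℝ g1 (Ψ p)).comp ((fderiv ℝ Fn p).prod (ContinuousLinearMap.snd ℝ ℝ ℝ))) p :=
      hg1d.hasFDerivAt.comp p hΨd
    have hR : HasFDerivAt (fun x : ℝ×ℝ => Real.exp x.1)
        (Real.exp p.1 • ContinuousLinearMap.fst ℝ ℝ ℝ) p :=
      (Real.hasDerivAt_exp p.1).comp_hasFDerivAt p hasFDerivAt_fst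
    have hEE : (fun x => g1 (Ψ x)) =ᶠ[nhds p] fun x : ℝ×ℝ => Real.exp x.1 := by
      filter_upwards [hU'.mem_nhds hp] with y hy
      exact hI y hy
    have huniq := hcomp.unique (hR.congr_of_eventuallyEq hEE)
    have h01 := congrArg (fun L : ℝ×ℝ →L[ℝ] ℝ => L (0,1)) huniq
    simp only [ContinuousLinearMap.comp_apply, ContinuousLinearMap.smul_apply,
      ContinuousLinearMap.prod_apply, ContinuousLinearMap.coe_fst', ContinuousLinearMap.coe_snd',
      smul_eq_mul] at h01
    rw [clm_eval] at h01
    simpa using h01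
  -- the point of interest
  set pt : ℝ × ℝ := (ξ, v) with hptdef
  have hqU : Ψ pt ∈ U := hΨU pt hpU'
  set q : ℝ × ℝ := Ψ pt with hqdef
  -- scalar values
  set A : ℝ := Real.exp ξ with hA
  set B : ℝ := g11 q with hB
  set C : ℝ := g21 q with hC
  set E3 : ℝ := fderiv ℝ g11 q (1,0) with hE3
  set F3 : ℝ := fderiv ℝ g21 q (1,0) with hF3
  set H3 : ℝ := fderiv ℝ g22 q (1,0) with hH3
  set D0 : ℝ := g q + g22 q - 2*a*g2 q with hD0
  -- symmetry facts
  have hs12 : g12 q = C := fderiv_symm hU hG hqU (1,0) (0,1)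
  have hsEq : fderiv ℝ g12 q = fderiv ℝ g21 q := by
    apply Filter.EventuallyEq.fderiv_eq
    filter_upwards [hU.mem_nhds hqU] with y hy
    exact fderiv_symm hU hG hy (1,0) (0,1)
  have hs112 : fderiv ℝ g11 q (0,1) = F3 := by
    have h1 : fderiv ℝ g11 q (0,1) = fderiv ℝ g12 q (1,0) :=
      fderiv_symm hU hg1s hqU (1,0) (0,1)
    rw [h1, hsEq]
  have hs122 : fderiv ℝ g12 q (0,1) = H3 := by
    rw [hsEq]
    exact fderiv_symm hU hg2s hqU (1,0) (0,1)
  have hs121 : fderiv ℝ g12 q (1,0) = F3 := by rw [hsEq]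
  -- value of g1 at q
  have hg1q : g1 q = A := hI pt hpU'
  -- equations e1, e2
  have e1 : φ1 pt * B = A := hI1 pt hpU'
  have e2 : φ2 pt * B + C = 0 := by
    have := hI2 pt hpU'
    rw [hs12] at this; exact this
  -- second-order equations
  have hΨd := hDΨ pt hpU'
  have hg11comp : HasFDerivAt (fun x => g11 (Ψ x))
      ((fderiv ℝ g11 q).comp ((fderiv ℝ Fn pt).prod (ContinuousLinearMap.snd ℝ ℝ ℝ))) pt :=
    (diffAt hU hg11s (hΨU pt hpU')).hasFDerivAt.comp pt hΨd
  have hg12comp : HasFDerivAt (fun x => g12 (Ψ x))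
      ((fderiv ℝ g12 q).comp ((fderiv ℝ Fn pt).prod (ContinuousLinearMap.snd ℝ ℝ ℝ))) pt :=
    (diffAt hU hg12s (hΨU pt hpU')).hasFDerivAt.comp pt hΨd
  have hφ1d : DifferentiableAt ℝ φ1 pt := diffAt hU' hφ1s hpU'
  have hφ2d : DifferentiableAt ℝ φ2 pt := diffAt hU' hφ2s hpU'
  -- differentiate hI1 in direction (1,0)
  have e3 : φ1 pt * (φ1 pt * E3) + B * fderiv ℝ φ1 pt (1,0) = A := by
    have hL : HasFDerivAt (fun x => φ1 x * g11 (Ψ x))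
        (φ1 pt • ((fderiv ℝ g11 q).comp ((fderiv ℝ Fn pt).prod (ContinuousLinearMap.snd ℝ ℝ ℝ)))
          + g11 q • fderiv ℝ φ1 pt) pt :=
      hφ1d.hasFDerivAt.mul hg11comp
    have hR : HasFDerivAt (fun x : ℝ×ℝ => Real.exp x.1)
        (Real.exp ξ • ContinuousLinearMap.fst ℝ ℝ ℝ) pt :=
      (Real.hasDerivAt_exp pt.1).comp_hasFDerivAt pt hasFDerivAt_fst
    have hEE : (fun x => φ1 x * g11 (Ψ x)) =ᶠ[nhds pt] fun x : ℝ×ℝ => Real.exp x.1 := by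
      filter_upwards [hU'.mem_nhds hpU'] with y hy
      exact hI1 y hy
    have huniq := hL.unique (hR.congr_of_eventuallyEq hEE)
    have h10 := congrArg (fun L : ℝ×ℝ →L[ℝ] ℝ => L (1,0)) huniq
    simp only [ContinuousLinearMap.add_apply, ContinuousLinearMap.comp_apply,
      ContinuousLinearMap.smul_apply, ContinuousLinearMap.prod_apply,
      ContinuousLinearMap.coe_fst', ContinuousLinearMap.coe_snd', smul_eq_mul] at h10
    rw [clm_eval (fderiv ℝ g11 q)] at h10
    rw [← hE3, hs112] at h10
    have hfold : fderiv ℝ Fn pt (1,0) = φ1 pt := rfl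
    rw [hfold] at h10
    rw [← hB] at h10
    linear_combination h10
  -- differentiate hI2 in directions (1,0) and (0,1)
  have hL2 : HasFDerivAt (fun x => φ2 x * g11 (Ψ x) + g12 (Ψ x))
      ((φ2 pt • ((fderiv ℝ g11 q).comp ((fderiv ℝ Fn pt).prod (ContinuousLinearMap.snd ℝ ℝ ℝ)))
        + g11 q • fderiv ℝ φ2 pt)
        + (fderiv ℝ g12 q).comp ((fderiv ℝ Fn pt).prod (ContinuousLinearMap.snd ℝ ℝ ℝ))) pt :=
    (hφ2d.hasFDerivAt.mul hg11comp).add hg12comp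
  have hEE2 : (fun x => φ2 x * g11 (Ψ x) + g12 (Ψ x)) =ᶠ[nhds pt]
      fun _ : ℝ×ℝ => (0:ℝ) := by
    filter_upwards [hU'.mem_nhds hpU'] with y hy
    exact hI2 y hy
  have huniq2 := hL2.unique ((hasFDerivAt_const (0:ℝ) pt).congr_of_eventuallyEq hEE2)
  have e4 : φ2 pt * (φ1 pt * E3) + B * fderiv ℝ φ2 pt (1,0) + φ1 pt * F3 = 0 := by
    have h10 := congrArg (fun L : ℝ×ℝ →L[ℝ] ℝ => L (1,0)) huniq2
    simp only [ContinuousLinearMap.add_apply, ContinuousLinearMap.comp_apply,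
      ContinuousLinearMap.smul_apply, ContinuousLinearMap.prod_apply,
      ContinuousLinearMap.coe_fst', ContinuousLinearMap.coe_snd', smul_eq_mul,
      ContinuousLinearMap.zero_apply] at h10
    rw [clm_eval (fderiv ℝ g11 q), clm_eval (fderiv ℝ g12 q)] at h10
    rw [← hE3, hs112, hs121, hs122] at h10
    have hfold : fderiv ℝ Fn pt (1,0) = φ1 pt := rfl
    rw [hfold] at h10
    rw [← hB] at h10
    linear_combination h10
  have e5 : φ2 pt * (φ2 pt * E3 + F3) + B * fderiv ℝ φ2 pt (0,1)
      + (φ2 pt * F3 + H3) = 0 := by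
    have h01 := congrArg (fun L : ℝ×ℝ →L[ℝ] ℝ => L (0,1)) huniq2
    simp only [ContinuousLinearMap.add_apply, ContinuousLinearMap.comp_apply,
      ContinuousLinearMap.smul_apply, ContinuousLinearMap.prod_apply,
      ContinuousLinearMap.coe_fst', ContinuousLinearMap.coe_snd', smul_eq_mul,
      ContinuousLinearMap.zero_apply] at h01
    rw [clm_eval (fderiv ℝ g11 q), clm_eval (fderiv ℝ g12 q)] at h01
    rw [← hE3, hs112, hs121, hs122] at h01
    have hfold : fderiv ℝ Fn pt (0,1) = φ2 pt := rfl
    rw [hfold] at h01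
    rw [← hB] at h01
    linear_combination h01
  -- e6: the PDE at q
  have e6 : D0 * B - A^2 - C^2 + 2*a*(A*C) = 4 := by
    have := heq' q hqU
    rw [hg1q] at this
    linear_combination this
  -- e7: derivative of the PDE at q in direction (1,0)
  have e7 : (A + H3 - 2*a*C) * B + D0 * E3 - 2*A*B - 2*C*F3 + 2*a*(B*C + A*F3) = 0 := by
    have hgd : DifferentiableAt ℝ g q := diffAt hU hG hqU
    have hg1d : DifferentiableAt ℝ g1 q := diffAt hU hg1s hqU
    have hg2d : DifferentiableAt ℝ g2 q := diffAt hU hg2s hqU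
    have hg11d : DifferentiableAt ℝ g11 q := diffAt hU hg11s hqU
    have hg21d : DifferentiableAt ℝ g21 q := diffAt hU hg21s hqU
    have hg22d : DifferentiableAt ℝ g22 q := diffAt hU hg22s hqU
    have hL7 : HasFDerivAt
        (fun p => (g p + g22 p - 2*a*g2 p) * g11 p - g1 p * g1 p - g21 p * g21 p + 2*a*(g1 p * g21 p))
        (((((g q + g22 q - 2*a*g2 q) • fderiv ℝ g11 q
            + g11 q • (fderiv ℝ g q + fderiv ℝ g22 q - (2*a) • fderiv ℝ g2 q))
          - (g1 q • fderiv ℝ g1 q + g1 q • fderiv ℝ g1 q))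
          - (g21 q • fderiv ℝ g21 q + g21 q • fderiv ℝ g21 q))
          + (2*a) • (g1 q • fderiv ℝ g21 q + g21 q • fderiv ℝ g1 q)) q := by
      exact ((((((hgd.hasFDerivAt.add hg22d.hasFDerivAt).sub
        (hg2d.hasFDerivAt.const_mul (2*a))).mul hg11d.hasFDerivAt).sub
        (hg1d.hasFDerivAt.mul hg1d.hasFDerivAt)).sub
        (hg21d.hasFDerivAt.mul hg21d.hasFDerivAt)).add
        ((hg1d.hasFDerivAt.mul hg21d.hasFDerivAt).const_mul (2*a)))
    have hEE7 : (fun p => (g p + g22 p - 2*a*g2 p) * g11 p - g1 p * g1 p - g21 p * g21 p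
        + 2*a*(g1 p * g21 p)) =ᶠ[nhds q] fun _ : ℝ×ℝ => (4:ℝ) := by
      filter_upwards [hU.mem_nhds hqU] with y hy
      exact heq' y hy
    have huniq7 := hL7.unique ((hasFDerivAt_const (4:ℝ) q).congr_of_eventuallyEq hEE7)
    have h10 := congrArg (fun L : ℝ×ℝ →L[ℝ] ℝ => L (1,0)) huniq7
    simp only [ContinuousLinearMap.add_apply, ContinuousLinearMap.sub_apply,
      ContinuousLinearMap.smul_apply, smul_eq_mul, ContinuousLinearMap.zero_apply] at h10
    have f1 : fderiv ℝ g q (1,0) = g1 q := rfl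
    have f2 : fderiv ℝ g1 q (1,0) = B := rfl
    have f3 : fderiv ℝ g2 q (1,0) = C := rfl
    rw [f1, f2, f3, ← hE3, ← hF3, ← hH3, hg1q] at h10
    rw [← hB, ← hC] at h10
    linear_combination h10
  -- positivity / nonvanishing
  have hApos : (0:ℝ) < A := Real.exp_pos ξ
  have hBne : B ≠ 0 := by
    intro h
    rw [h, mul_zero] at e1
    exact absurd e1.symm (ne_of_gt hApos)
  -- exponential relation
  have hX : Real.exp (-2*ξ) * A^2 = 1 := by
    rw [hA, sq, ← Real.exp_add, ← Real.exp_add, show -2*ξ + (ξ + ξ) = 0 by ring, Real.exp_zero]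
  -- rewrite the goal
  have hgoal1 := cf11 pt hpU'
  have hgoal2 := cf1 pt hpU'
  have hgoal3 := cf22 pt hpU'
  have hgoal4 := cf21 pt hpU'
  show 4 * Real.exp (-2 * ξ) * (p1 (p1 f) pt.1 pt.2 - p1 f pt.1 pt.2)
      + p2 (p2 f) pt.1 pt.2 + 2 * a * p1 (p2 f) pt.1 pt.2 + p1 (p1 f) pt.1 pt.2 = 0
  rw [hgoal1, hgoal2, hgoal3, hgoal4]
  -- final algebra
  set X : ℝ := Real.exp (-2*ξ) with hXd
  set u1 : ℝ := φ1 pt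
  set u2 : ℝ := φ2 pt
  set u11 : ℝ := fderiv ℝ φ1 pt (1,0)
  set u21 : ℝ := fderiv ℝ φ2 pt (1,0)
  set u22 : ℝ := fderiv ℝ φ2 pt (0,1)
  have key : (4 * X * (u11 - u1) + u22 + 2*a*u21 + u11) * (A^2 * B^3) = 0 := by
    linear_combination (4*B^3*(u11 - u1)) * hX
      + (-4*B^2 - 4*E3*(B*u1 + A) - A^2*E3*(B*u1 + A) + 2*a*A^2*C*E3 - 2*a*A^2*B*F3) * e1
      + (-A^2*E3*(B*u2 - C) - 2*A^2*B*F3 - 2*a*A^2*E3*(B*u1)) * e2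
      + (4*B^2 + A^2*B^2) * e3
      + (2*a*A^2*B^2) * e4
      + (A^2*B^2) * e5
      + (A^2*E3) * e6
      + (-A^2*B) * e7
  have hne : A^2 * B^3 ≠ 0 :=
    mul_ne_zero (pow_ne_zero 2 (ne_of_gt hApos)) (pow_ne_zero 3 hBne)
  have := (mul_eq_zero.mp key).resolve_right hne
  linarith [this]

end
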